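/- Perspective characterization of the MICP node constraints: fix a node i with time window t̲_i ≤ t̄_i, start position p̲_i ∈ ℝ², and velocity v_i ∈ ℝ², and set X_i = {(p, t) ∈ ℝ² × ℝ : t̲_i ≤ t ≤ t̄_i and p = p̲_i + (t − t̲_i)·v_i}. Then for every y ∈ {0,1}, z_p ∈ ℝ², and z_t ∈ ℝ, the constraints y·t̲_i ≤ z_t ≤ y·t̄_i and z_p = z_t·v_i + y·(p̲_i − t̲_i·v_i) hold if and only if there exists (p, t) ∈ X_i with z_p = y·p and z_t = y·t. -/
import Mathlib


noncomputable section

/-- The Euclidean plane ℝ². -/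
abbrev Plane := EuclideanSpace ℝ (Fin 2)

/-- **perspective characterization of the MICP node constraints.**
For a node with time window `tlo ≤ thi`, start position `pbar` and velocity `v`, and
for any `y ∈ {0,1}`, `z_p ∈ ℝ²`, `z_t ∈ ℝ`, the constraints
`y·tlo ≤ z_t ≤ y·thi` and `z_p = z_t·v + y·(pbar − tlo·v)` hold if and only if there
exists `(p, t) ∈ X_i` with `z_p = y·p` and `z_t = y·t`, where
`X_i = {(p,t) : tlo ≤ t ≤ thi ∧ p = pbar + (t − tlo)·v}`. -/
theorem perspective_characterization
    (tlo thi : ℝ) (htw : tlo ≤ thi) (pbar v : Plane)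
    (y : ℝ) (hy : y = 0 ∨ y = 1) (zp : Plane) (zt : ℝ) :
    (y * tlo ≤ zt ∧ zt ≤ y * thi ∧ zp = zt • v + y • (pbar - tlo • v)) ↔
      (∃ (p : Plane) (t : ℝ),
        (tlo ≤ t ∧ t ≤ thi ∧ p = pbar + (t - tlo) • v) ∧ zp = y • p ∧ zt = y * t) := by
  constructor
  · rintro ⟨h1, h2, h3⟩
    rcases hy with rfl | rfl
    · refine ⟨pbar, tlo, ⟨le_refl _, htw, by simp⟩, ?_, ?_⟩
      · simp only [zero_smul]
        rw [h3]
        have : zt = 0 := le_antisymm (by simpa using h2) (by simpa using h1)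
        simp [this]
      · simpa using le_antisymm (by simpa using h2) (by simpa using h1)
    · refine ⟨pbar + (zt - tlo) • v, zt, ⟨by simpa using h1, by simpa using h2, rfl⟩, ?_, by ring⟩
      rw [h3]
      simp [sub_smul, smul_sub]
      abel
  · rintro ⟨p, t, ⟨ht1, ht2, rfl⟩, rfl, rfl⟩
    refine ⟨?_, ?_, ?_⟩
    · rcases hy with rfl | rfl <;> simp [ht1]
    · rcases hy with rfl | rfl <;> simp [ht2]
    · rcases hy with rfl | rfl <;> simp [smul_add, sub_smul, smul_sub] <;> abel

end
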